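/- Let G be a Hermitian matrix over ℂ indexed by a finite type, and let G⁺ be its stoquastic. For every vector x ∈ ℂⁿ, the (real) Rayleigh quantity satisfies ⟨x, G x⟩ ≤ ⟨|x|, G⁺ |x|⟩, where |x| is the vector with components |xᵢ|. -/

import Mathlib

open Matrix Finset


/-- The stoquastic of a complex (Hermitian) matrix: the real matrix keeping the (real)
diagonal entries and replacing each off-diagonal entry by its absolute value. -/
noncomputable def stoqC {n : Type*} [DecidableEq n] (A : Matrix n n ℂ) : Matrix n n ℝ :=
  fun i j => if i = j then (A i j).re else ‖A i j‖

lemma stoqC_isHermitian {n : Type*} [Fintype n] [DecidableEq n] {A : Matrix n n ℂ}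
    (hA : A.IsHermitian) : (stoqC A).IsHermitian := by
  ext i j
  by_cases h : i = j
  · subst h; simp [stoqC, Matrix.conjTranspose_apply]
  · have h1 : star (A j i) = A i j := hA.apply i j
    simp only [Matrix.conjTranspose_apply, stoqC, h, Ne.symm h, if_false, star_trivial]
    rw [← h1]
    simp

/-- **Rayleigh quotient bound for the stoquastic.** For a Hermitian matrix `G` over ℂ and
any vector `x`, the (real) Rayleigh quantity satisfies `⟨x, G x⟩ ≤ ⟨|x|, G⁺ |x|⟩`,
where `|x|` is the vector of componentwise absolute values. -/
theorem rayleigh_le_stoquastic_rayleigh {n : Type*} [Fintype n] [DecidableEq n]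
    {G : Matrix n n ℂ} (hG : G.IsHermitian) (x : n → ℂ) :
    (star x ⬝ᵥ (G *ᵥ x)).re ≤
      (fun i => ‖x i‖) ⬝ᵥ (stoqC G *ᵥ fun i => ‖x i‖) := by
  have hdiag : ∀ i, (G i i).im = 0 := fun i => by
    have h := hG.apply i i
    have := (congrArg Complex.im h)
    simp at this
    linarith
  simp only [dotProduct, mulVec, dotProduct, Pi.star_apply, Finset.mul_sum, Complex.re_sum]
  apply Finset.sum_le_sum
  intro i _
  apply Finset.sum_le_sum
  intro j _
  by_cases h : i = j
  · subst h
    simp only [stoqC, if_pos rfl]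
    have : (star (x i) * (G i i * x i)).re = (G i i).re * (‖x i‖)^2 := by
      rw [show star (x i) * (G i i * x i) = G i i * (x i * star (x i)) by ring,
        Complex.star_def, Complex.mul_conj]
      simp [Complex.mul_re, hdiag, Complex.sq_norm]
    rw [this, if_pos trivial]; exact le_of_eq (by ring)
  · calc (star (x i) * (G i j * x j)).re ≤ ‖star (x i) * (G i j * x j)‖ :=
        Complex.re_le_norm _
      _ = ‖x i‖ * (stoqC G i j * ‖x j‖) := by
        simp only [stoqC, if_neg h, norm_mul, Complex.norm_conj, Complex.star_def]
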